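/- Let β : ℝ → U(m) be continuous, ℤ-periodic, and satisfy β(-k) = ε⁻¹·conj(β(k))·ε for a fixed unitary skew-symmetric ε. Then det β(0) = det β(1/2) = 1, and the degree of the map det β : ℝ/ℤ → U(1) is an even integer. -/

import Mathlib

open Matrix

/-- integer-valued continuous functions on ℝ are constant -/
theorem intconst {f : ℝ → ℝ} (hf : Continuous f) (hz : ∀ x, ∃ n : ℤ, f x = n)
    (a b : ℝ) : f a = f b := by
  by_contra hne
  obtain ⟨na, hna⟩ := hz a
  obtain ⟨nb, hnb⟩ := hz b
  have key : ∀ u v : ℝ, f u < f v → False := by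
    intro u v huv
    obtain ⟨nu, hnu⟩ := hz u
    obtain ⟨nv, hnv⟩ := hz v
    have hlt : nu < nv := by
      have := huv; rw [hnu, hnv] at this; exact_mod_cast this
    have hle : (nu : ℝ) + 1 ≤ nv := by exact_mod_cast hlt
    have hmem : (nu : ℝ) + 1/2 ∈ Set.Icc (f u) (f v) := by
      constructor
      · rw [hnu]; linarith
      · rw [hnv]; linarith
    obtain ⟨x, hx⟩ := intermediate_value_univ u v hf hmem
    obtain ⟨nx, hnx⟩ := hz x
    rw [hnx] at hx
    have h1 : ((nx - nu : ℤ) : ℝ) = 1/2 := by push_cast; linarith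
    have h2 : (0:ℝ) < ((nx - nu : ℤ) : ℝ) := by rw [h1]; norm_num
    have h3 : ((nx - nu : ℤ) : ℝ) < 1 := by rw [h1]; norm_num
    have h2' : 0 < nx - nu := by exact_mod_cast h2
    have h3' : nx - nu < 1 := by exact_mod_cast h3
    omega
  rcases lt_or_gt_of_ne hne with h | h
  · exact key a b h
  · exact key b a h

/-- KEY: a unitary matrix `A` with `ε * A = conj A * ε` for a unitary
skew-symmetric `ε` has determinant 1. -/
theorem key_det : ∀ (N : ℕ) (n : Type) [Fintype n] [DecidableEq n], Fintype.card n = N →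
    ∀ (A ε : Matrix n n ℂ), A ∈ Matrix.unitaryGroup n ℂ → ε ∈ Matrix.unitaryGroup n ℂ →
    εᵀ = -ε → ε * A = A.map (starRingEnd ℂ) * ε → A.det = 1 := by
  intro N
  induction N using Nat.strong_induction_on with
  | _ N IH =>
    intro n _ _ hcard A ε hA hε hskew hrel
    rcases Nat.eq_zero_or_pos N with hN0 | hNpos
    · subst hN0
      have : IsEmpty n := Fintype.card_eq_zero_iff.mp hcard
      exact Matrix.det_isEmpty
    · have hne : Nonempty n := Fintype.card_pos_iff.mp (hcard ▸ hNpos)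
      have hAl : star A * A = 1 := Matrix.mem_unitaryGroup_iff'.mp hA
      have hAr : A * star A = 1 := Matrix.mem_unitaryGroup_iff.mp hA
      have hεl : star ε * ε = 1 := Matrix.mem_unitaryGroup_iff'.mp hε
      have hεr : ε * star ε = 1 := Matrix.mem_unitaryGroup_iff.mp hε
      -- eigenvector
      obtain ⟨μ, hμev⟩ := Module.End.exists_eigenvalue (Matrix.mulVecLin A)
      obtain ⟨v₀, hv₀eig⟩ := hμev.exists_hasEigenvector
      have hv₀ : A *ᵥ v₀ = μ • v₀ := by
        have := hv₀eig.apply_eq_smul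
        simpa [Matrix.mulVecLin_apply] using this
      have hv₀ne : v₀ ≠ 0 := hv₀eig.right
      -- normalize
      set R : ℝ := ∑ i, Complex.normSq (v₀ i) with hR
      have hRdot : star v₀ ⬝ᵥ v₀ = (R : ℂ) := by
        simp only [dotProduct, Pi.star_apply, hR]
        push_cast
        congr 1; ext i
        rw [Complex.star_def, ← Complex.normSq_eq_conj_mul_self]
      have hRpos : 0 < R := by
        obtain ⟨i, hi⟩ := Function.ne_iff.mp hv₀ne
        exact Finset.sum_pos' (fun j _ => Complex.normSq_nonneg _)
          ⟨i, Finset.mem_univ i, Complex.normSq_pos.mpr hi⟩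
      set s : ℝ := (Real.sqrt R)⁻¹ with hs
      set v : n → ℂ := (s : ℂ) • v₀ with hv
      have hvnorm : star v ⬝ᵥ v = 1 := by
        rw [hv, star_smul, smul_dotProduct, dotProduct_smul, hRdot]
        rw [smul_eq_mul, smul_eq_mul]
        have hstar : star ((s:ℂ)) = (s:ℂ) := by
          rw [Complex.star_def, Complex.conj_ofReal]
        rw [hstar, ← Complex.ofReal_mul, ← Complex.ofReal_mul, hs]
        norm_cast
        rw [← Real.sqrt_mul_self (le_of_lt hRpos)]
        field_simp
        rw [Real.sq_sqrt (Real.sqrt_nonneg _)]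
      have hAv : A *ᵥ v = μ • v := by
        rw [hv, mulVec_smul, hv₀, smul_comm]
      clear_value v s
      clear hv hv₀ hv₀ne hv₀eig hμev hRdot hRpos hR hs
      -- |μ| = 1
      have hμ : (starRingEnd ℂ) μ * μ = 1 := by
        have h1 : star (A *ᵥ v) ⬝ᵥ (A *ᵥ v) = star v ⬝ᵥ v := by
          rw [star_mulVec, dotProduct_mulVec, vecMul_vecMul, ← Matrix.star_eq_conjTranspose,
            hAl, vecMul_one]
        rw [hAv, star_smul, smul_dotProduct, dotProduct_smul, hvnorm] at h1
        simpa [smul_eq_mul, mul_assoc] using h1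
      have hμne : μ ≠ 0 := by
        intro h; rw [h, mul_zero] at hμ; exact zero_ne_one hμ
      -- the partner vector w
      set w : n → ℂ := star ε *ᵥ star v with hwdef
      have hεw : ε *ᵥ w = star v := by
        rw [hwdef, mulVec_mulVec, hεr, one_mulVec]
      have hsw : star w = -(ε *ᵥ v) := by
        rw [hwdef, star_mulVec, star_star, Matrix.star_eq_conjTranspose,
          conjTranspose_conjTranspose, ← mulVec_transpose, hskew, neg_mulVec]
      have hεv : ε *ᵥ v = -star w := by rw [hsw, neg_neg]
      -- ε-mulVec is injective
      have hεinj : ∀ x y : n → ℂ, ε *ᵥ x = ε *ᵥ y → x = y := by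
        intro x y hxy
        have := congrArg (fun z => star ε *ᵥ z) hxy
        simpa [mulVec_mulVec, hεl, one_mulVec] using this
      -- conj A mulVec of star v
      have hconjA : ∀ x : n → ℂ, A.map (starRingEnd ℂ) *ᵥ star x = star (A *ᵥ x) := by
        intro x
        rw [star_mulVec, ← mulVec_transpose]
        rfl
      -- A w = conj μ • w
      have hAw : A *ᵥ w = (starRingEnd ℂ) μ • w := by
        apply hεinj
        have h1 : ε *ᵥ (A *ᵥ w) = (ε * A) *ᵥ w := by rw [mulVec_mulVec]
        rw [h1, hrel, ← mulVec_mulVec, hεw, hconjA, hAv, star_smul, mulVec_smul, hεw]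
        rfl
      -- skew orthogonality
      have hskew_dot : ∀ x : n → ℂ, (ε *ᵥ x) ⬝ᵥ x = 0 := by
        intro x
        have h1 : (ε *ᵥ x) ⬝ᵥ x = x ⬝ᵥ (ε *ᵥ x) := dotProduct_comm _ _
        rw [dotProduct_mulVec, ← mulVec_transpose, hskew, neg_mulVec, neg_dotProduct] at h1
        linear_combination h1 / 2
      -- orthonormality of v, w
      have hvw : star v ⬝ᵥ w = 0 := by
        rw [← hεw]; exact hskew_dot w
      have hwv : star w ⬝ᵥ v = 0 := by
        rw [star_dotProduct, hvw, star_zero]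
      have h2 : (ε *ᵥ v) ⬝ᵥ w = -1 := by
        rw [dotProduct_comm, dotProduct_mulVec, ← mulVec_transpose, hskew, neg_mulVec, hεw,
          neg_dotProduct, hvnorm]
      have hwnorm : star w ⬝ᵥ w = 1 := by
        rw [hsw, neg_dotProduct, h2, neg_neg]
      clear_value w
      have hvnorm' : ∑ x, (starRingEnd ℂ) (v x) * v x = 1 := by
        simpa only [dotProduct, Pi.star_apply, Complex.star_def] using hvnorm
      have hvw' : ∑ x, (starRingEnd ℂ) (v x) * w x = 0 := by
        simpa only [dotProduct, Pi.star_apply, Complex.star_def] using hvw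
      have hwv' : ∑ x, (starRingEnd ℂ) (w x) * v x = 0 := by
        simpa only [dotProduct, Pi.star_apply, Complex.star_def] using hwv
      have hwnorm' : ∑ x, (starRingEnd ℂ) (w x) * w x = 1 := by
        simpa only [dotProduct, Pi.star_apply, Complex.star_def] using hwnorm
      -- the pair (v,w) is orthonormal in EuclideanSpace
      have hpair : Orthonormal ℂ
          (![(WithLp.equiv 2 (n → ℂ)).symm v, (WithLp.equiv 2 (n → ℂ)).symm w]) := by
        rw [orthonormal_iff_ite]
        intro i j
        fin_cases i <;> fin_cases j <;>
          simp only [Matrix.cons_val_zero, Matrix.cons_val_one, Matrix.head_cons,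
            WithLp.equiv_symm_apply] <;> rw [EuclideanSpace.inner_toLp_toLp, dotProduct_comm] <;>
          simp [hvnorm, hvw, hwv, hwnorm]
      -- hence the dimension is at least 2
      have hcard2 : 1 < Fintype.card n := by
        have h1 := hpair.linearIndependent.fintype_card_le_finrank
        rw [finrank_euclideanSpace] at h1
        simp at h1; omega
      obtain ⟨i₀, i₁, hi01⟩ := Fintype.exists_pair_of_one_lt_card hcard2
      have hi01' : ¬ (i₁ = i₀) := fun h => hi01 h.symm
      -- extend to an orthonormal basis
      set vv : n → EuclideanSpace ℂ n := fun i =>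
        if i = i₀ then (WithLp.equiv 2 (n → ℂ)).symm v
        else if i = i₁ then (WithLp.equiv 2 (n → ℂ)).symm w else 0 with hvv
      have hortho : Orthonormal ℂ (Set.restrict {i₀, i₁} vv) := by
        rw [orthonormal_iff_ite]
        rintro ⟨i, hi⟩ ⟨j, hj⟩
        simp only [Set.mem_insert_iff, Set.mem_singleton_iff] at hi hj
        rcases hi with rfl | rfl <;> rcases hj with rfl | rfl <;>
          simp only [Set.restrict_apply, hvv, if_pos rfl, hi01', if_neg, if_true, Subtype.mk.injEq,
            WithLp.equiv_symm_apply, Set.restrict, Set.domRestrict_apply] <;>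
          rw [EuclideanSpace.inner_toLp_toLp, dotProduct_comm] <;>
          first
          | exact hvnorm | exact hvw | exact hwv | exact hwnorm
          | simp [hi01, hi01', hvnorm', hvw', hwv', hwnorm', hvnorm, hvw, hwv, hwnorm]
      obtain ⟨b, hb⟩ := hortho.exists_orthonormalBasis_extension_of_card_eq
        (by rw [finrank_euclideanSpace])
      have hbi₀ : b i₀ = (WithLp.equiv 2 (n → ℂ)).symm v := by
        rw [hb i₀ (by simp), hvv]; simp
      have hbi₁ : b i₁ = (WithLp.equiv 2 (n → ℂ)).symm w := by
        rw [hb i₁ (by simp), hvv]; simp [hi01']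
      -- the change-of-basis matrix
      set β' : n → (n → ℂ) := fun j => (WithLp.equiv 2 (n → ℂ)) (b j) with hβ'
      set U : Matrix n n ℂ := Matrix.of (fun i j => β' j i) with hU
      have hβ'v : β' i₀ = v := by rw [hβ']; simp only [hbi₀, Equiv.apply_symm_apply]
      have hβ'w : β' i₁ = w := by rw [hβ']; simp only [hbi₁, Equiv.apply_symm_apply]
      have horth : ∀ j k, star (β' j) ⬝ᵥ (β' k) = if j = k then 1 else 0 := by
        intro j k
        have h1 := orthonormal_iff_ite.mp b.orthonormal j k
        rw [EuclideanSpace.inner_eq_star_dotProduct] at h1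
        rw [dotProduct_comm]; exact h1
      have hUl : star U * U = 1 := by
        ext j k
        have h1 : (star U * U) j k = star (β' j) ⬝ᵥ (β' k) := by
          simp [Matrix.mul_apply, Matrix.star_apply, dotProduct, hU]
        rw [h1, horth, Matrix.one_apply]
      have hUr : U * star U = 1 := mul_eq_one_comm.mp hUl
      have hsUt : star (Uᵀ) = U.map (starRingEnd ℂ) := by
        ext i j
        simp [Matrix.star_apply]
      have hsUc : (star U).map (starRingEnd ℂ) = Uᵀ := by
        ext i j
        simp [Matrix.star_apply]
      have hUc : U.map (starRingEnd ℂ) * Uᵀ = 1 := by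
        have := congrArg (fun M => M.map (starRingEnd ℂ)) hUr
        simpa [Matrix.map_mul, hsUc] using this
      have hUmem : U ∈ Matrix.unitaryGroup n ℂ := Matrix.mem_unitaryGroup_iff'.mpr hUl
      have hUtmem : Uᵀ ∈ Matrix.unitaryGroup n ℂ :=
        Matrix.mem_unitaryGroup_iff'.mpr (by rw [hsUt, hUc])
      -- conjugated matrices
      set B : Matrix n n ℂ := star U * A * U with hB
      set F : Matrix n n ℂ := Uᵀ * ε * U with hF
      have hdetB : B.det = A.det := by
        have h1 : B.det = (star U).det * A.det * U.det := by
          rw [hB, Matrix.det_mul, Matrix.det_mul]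
        have h2 : (star U).det * U.det = 1 := by
          rw [← Matrix.det_mul, hUl, Matrix.det_one]
        calc B.det = (star U).det * U.det * A.det := by rw [h1]; ring
        _ = A.det := by rw [h2, one_mul]
      have hBent : ∀ j k, B j k = star (β' j) ⬝ᵥ (A *ᵥ β' k) := by
        intro j k
        rw [hB, Matrix.mul_assoc]
        simp [Matrix.mul_apply, Matrix.star_apply, dotProduct, Matrix.mulVec, hU]
      have hFent : ∀ j k, F j k = (β' j) ⬝ᵥ (ε *ᵥ β' k) := by
        intro j k
        rw [hF, Matrix.mul_assoc]
        simp [Matrix.mul_apply, dotProduct, Matrix.mulVec, hU]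
      -- eigen-relations for star A
      have hstarAv : star A *ᵥ v = (starRingEnd ℂ) μ • v := by
        have h0 : star A *ᵥ (A *ᵥ v) = v := by rw [mulVec_mulVec, hAl, one_mulVec]
        rw [hAv, mulVec_smul] at h0
        calc star A *ᵥ v = ((starRingEnd ℂ) μ * μ) • (star A *ᵥ v) := by rw [hμ, one_smul]
        _ = (starRingEnd ℂ) μ • (μ • (star A *ᵥ v)) := by rw [← smul_smul]
        _ = (starRingEnd ℂ) μ • v := by rw [h0]
      have hstarAw : star A *ᵥ w = μ • w := by
        have h0 : star A *ᵥ (A *ᵥ w) = w := by rw [mulVec_mulVec, hAl, one_mulVec]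
        rw [hAw, mulVec_smul] at h0
        calc star A *ᵥ w = (μ * (starRingEnd ℂ) μ) • (star A *ᵥ w) := by
              rw [mul_comm, hμ, one_smul]
        _ = μ • ((starRingEnd ℂ) μ • (star A *ᵥ w)) := by rw [← smul_smul]
        _ = μ • w := by rw [h0]
      have hvA : star v ᵥ* A = μ • star v := by
        have h1 : star (star A *ᵥ v) = star v ᵥ* A := by
          rw [star_mulVec, Matrix.star_eq_conjTranspose, conjTranspose_conjTranspose]
        rw [← h1, hstarAv, star_smul, starRingEnd_apply, star_star]
      have hwA : star w ᵥ* A = (starRingEnd ℂ) μ • star w := by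
        have h1 : star (star A *ᵥ w) = star w ᵥ* A := by
          rw [star_mulVec, Matrix.star_eq_conjTranspose, conjTranspose_conjTranspose]
        rw [← h1, hstarAw, star_smul, starRingEnd_apply]
      -- row and column formulas for B
      have hrow0 : ∀ k, B i₀ k = μ * (if i₀ = k then 1 else 0) := by
        intro k
        rw [hBent, hβ'v, dotProduct_mulVec, hvA, smul_dotProduct, smul_eq_mul, ← hβ'v, horth]
      have hrow1 : ∀ k, B i₁ k = (starRingEnd ℂ) μ * (if i₁ = k then 1 else 0) := by
        intro k
        rw [hBent, hβ'w, dotProduct_mulVec, hwA, smul_dotProduct, smul_eq_mul, ← hβ'w, horth]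
      have hcol0 : ∀ j, B j i₀ = μ * (if j = i₀ then 1 else 0) := by
        intro j
        rw [hBent, hβ'v, hAv, dotProduct_smul, smul_eq_mul, ← hβ'v, horth]
      have hcol1 : ∀ j, B j i₁ = (starRingEnd ℂ) μ * (if j = i₁ then 1 else 0) := by
        intro j
        rw [hBent, hβ'w, hAw, dotProduct_smul, smul_eq_mul, ← hβ'w, horth]
      -- formulas for F
      have hdstar : ∀ (x y : n → ℂ), x ⬝ᵥ star y = star (star x ⬝ᵥ y) := by
        intro x y
        rw [dotProduct_star, dotProduct_comm y (star x)]
      have hFcol0 : ∀ k, F k i₀ = -(if k = i₁ then 1 else 0) := by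
        intro k
        rw [hFent, hβ'v, hεv, dotProduct_neg, hdstar, ← hβ'w, horth]
        simp [apply_ite (star : ℂ → ℂ)]
      have hFcol1 : ∀ k, F k i₁ = (if k = i₀ then 1 else 0) := by
        intro k
        rw [hFent, hβ'w, hεw, hdstar, ← hβ'v, horth]
        simp [apply_ite (star : ℂ → ℂ)]
      have hFskew : Fᵀ = -F := by
        rw [hF]
        simp only [Matrix.transpose_mul, Matrix.transpose_transpose, hskew]
        simp only [Matrix.mul_neg, Matrix.neg_mul, Matrix.mul_assoc]
      have hFflip : ∀ j k, F j k = -(F k j) := by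
        intro j k
        have h1 : Fᵀ k j = -(F k j) := by rw [hFskew, Matrix.neg_apply]
        rw [← h1, Matrix.transpose_apply]
      have hFrow0 : ∀ k, F i₀ k = (if k = i₁ then 1 else 0) := by
        intro k
        rw [hFflip, hFcol0, neg_neg]
      have hFrow1 : ∀ k, F i₁ k = -(if k = i₀ then 1 else 0) := by
        intro k
        rw [hFflip, hFcol1]
      -- F is unitary
      have hFmem : F ∈ Matrix.unitaryGroup n ℂ := mul_mem (mul_mem hUtmem hε) hUmem
      have hBmem : B ∈ Matrix.unitaryGroup n ℂ :=
        mul_mem (mul_mem (Unitary.star_mem hUmem) hA) hUmem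
      -- the relation transported to B, F
      have hrelB : F * B = B.map (starRingEnd ℂ) * F := by
        have hBmap : B.map (starRingEnd ℂ)
            = Uᵀ * A.map (starRingEnd ℂ) * U.map (starRingEnd ℂ) := by
          rw [hB, Matrix.map_mul, Matrix.map_mul, hsUc]
        rw [hBmap, hF, hB]
        have e1 : U * (star U * (A * U)) = A * U := by
          rw [← Matrix.mul_assoc, hUr, Matrix.one_mul]
        have e2 : U.map (starRingEnd ℂ) * (Uᵀ * (ε * U)) = ε * U := by
          rw [← Matrix.mul_assoc, hUc, Matrix.one_mul]
        simp only [Matrix.mul_assoc]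
        rw [e1, e2, ← Matrix.mul_assoc ε A U, ← Matrix.mul_assoc (A.map (starRingEnd ℂ)) ε U,
          hrel]
      -- vanishing of special rows/columns outside the distinguished pair
      set p : n → Prop := fun i => i = i₀ ∨ i = i₁ with hp
      have hBz1 : ∀ x, ¬ p x → B i₀ x = 0 := fun x hx => by
        rw [hrow0, if_neg (fun h => hx (Or.inl h.symm)), mul_zero]
      have hBz2 : ∀ x, ¬ p x → B i₁ x = 0 := fun x hx => by
        rw [hrow1, if_neg (fun h => hx (Or.inr h.symm)), mul_zero]
      have hBz3 : ∀ x, ¬ p x → B x i₀ = 0 := fun x hx => by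
        rw [hcol0, if_neg (fun h => hx (Or.inl h)), mul_zero]
      have hBz4 : ∀ x, ¬ p x → B x i₁ = 0 := fun x hx => by
        rw [hcol1, if_neg (fun h => hx (Or.inr h)), mul_zero]
      have hFz1 : ∀ x, ¬ p x → F x i₀ = 0 := fun x hx => by
        rw [hFcol0, if_neg (fun h => hx (Or.inr h)), neg_zero]
      have hFz2 : ∀ x, ¬ p x → F x i₁ = 0 := fun x hx => by
        rw [hFcol1, if_neg (fun h => hx (Or.inl h))]
      have hFz3 : ∀ x, ¬ p x → F i₀ x = 0 := fun x hx => by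
        rw [hFrow0, if_neg (fun h => hx (Or.inr h))]
      have hFz4 : ∀ x, ¬ p x → F i₁ x = 0 := fun x hx => by
        rw [hFrow1, if_neg (fun h => hx (Or.inl h)), neg_zero]
      -- restricted matrices
      have hsum : ∀ f : n → ℂ, f i₀ = 0 → f i₁ = 0 →
          ∑ i : {i // ¬ p i}, f i.1 = ∑ i, f i := by
        intro f h0 h1
        have e1 : ∑ i ∈ Finset.univ.filter (fun i => ¬ p i), f i
            = ∑ i : {i // ¬ p i}, f i.1 := by
          rw [Finset.sum_subtype]
          intro x; simp
        rw [← e1]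
        apply Finset.sum_filter_of_ne
        intro x _ hfx hpx
        rcases not_not.mp (fun hnp => hfx (absurd hpx hnp)) with rfl | rfl
        · exact hfx h0
        · exact hfx h1
      set B' : Matrix {i // ¬ p i} {i // ¬ p i} ℂ := Matrix.of (fun j k => B j.1 k.1) with hB'
      set F' : Matrix {i // ¬ p i} {i // ¬ p i} ℂ := Matrix.of (fun j k => F j.1 k.1) with hF'
      have hB'mem : B' ∈ Matrix.unitaryGroup {i // ¬ p i} ℂ := by
        rw [Matrix.mem_unitaryGroup_iff']
        ext j k
        have h1 : (star B' * B') j k = ∑ i : {i // ¬ p i}, star (B i.1 j.1) * B i.1 k.1 := by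
          simp [Matrix.mul_apply, Matrix.star_apply, hB']
        have h2 : (star B * B) j.1 k.1 = ∑ i, star (B i j.1) * B i k.1 := by
          simp [Matrix.mul_apply, Matrix.star_apply]
        rw [h1, hsum (fun i => star (B i j.1) * B i k.1)
            (by beta_reduce; rw [hBz1 j.1 j.2, star_zero, zero_mul])
            (by beta_reduce; rw [hBz2 j.1 j.2, star_zero, zero_mul])]
        beta_reduce
        rw [← h2, Matrix.mem_unitaryGroup_iff'.mp hBmem, Matrix.one_apply, Matrix.one_apply]
        simp [Subtype.ext_iff]
      have hF'mem : F' ∈ Matrix.unitaryGroup {i // ¬ p i} ℂ := by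
        rw [Matrix.mem_unitaryGroup_iff']
        ext j k
        have h1 : (star F' * F') j k = ∑ i : {i // ¬ p i}, star (F i.1 j.1) * F i.1 k.1 := by
          simp [Matrix.mul_apply, Matrix.star_apply, hF']
        have h2 : (star F * F) j.1 k.1 = ∑ i, star (F i j.1) * F i k.1 := by
          simp [Matrix.mul_apply, Matrix.star_apply]
        rw [h1, hsum (fun i => star (F i j.1) * F i k.1)
            (by beta_reduce; rw [hFz3 j.1 j.2, star_zero, zero_mul])
            (by beta_reduce; rw [hFz4 j.1 j.2, star_zero, zero_mul])]
        beta_reduce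
        rw [← h2, Matrix.mem_unitaryGroup_iff'.mp hFmem, Matrix.one_apply, Matrix.one_apply]
        simp [Subtype.ext_iff]
      have hF'skew : F'ᵀ = -F' := by
        ext j k
        have := hFflip j.1 k.1
        simp only [Matrix.transpose_apply, Matrix.neg_apply, hF', Matrix.of_apply]
        rw [this, neg_neg]
      have hrelB' : F' * B' = B'.map (starRingEnd ℂ) * F' := by
        ext j k
        have h1 : (F' * B') j k = ∑ i : {i // ¬ p i}, F j.1 i.1 * B i.1 k.1 := by
          simp [Matrix.mul_apply, hB', hF']
        have h2 : (B'.map (starRingEnd ℂ) * F') j k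
            = ∑ i : {i // ¬ p i}, (starRingEnd ℂ) (B j.1 i.1) * F i.1 k.1 := by
          simp [Matrix.mul_apply, hB', hF']
        have h3 : (F * B) j.1 k.1 = ∑ i, F j.1 i * B i k.1 := by
          simp [Matrix.mul_apply]
        have h4 : (B.map (starRingEnd ℂ) * F) j.1 k.1
            = ∑ i, (starRingEnd ℂ) (B j.1 i) * F i k.1 := by
          simp [Matrix.mul_apply]
        rw [h1, h2,
          hsum (fun i => F j.1 i * B i k.1)
            (by beta_reduce; rw [hBz1 k.1 k.2, mul_zero])
            (by beta_reduce; rw [hBz2 k.1 k.2, mul_zero]),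
          hsum (fun i => (starRingEnd ℂ) (B j.1 i) * F i k.1)
            (by beta_reduce; rw [hFz3 k.1 k.2, mul_zero])
            (by beta_reduce; rw [hFz4 k.1 k.2, mul_zero])]
        beta_reduce
        rw [← h3, ← h4, hrelB]
      -- induction hypothesis
      have hcardr : Fintype.card {i // ¬ p i} < N := by
        rw [← hcard]
        exact Fintype.card_subtype_lt (x := i₀) (not_not_intro (Or.inl rfl))
      have hdetB' : B'.det = 1 :=
        IH (Fintype.card {i // ¬ p i}) hcardr {i // ¬ p i} rfl B' F' hB'mem hF'mem hF'skew
          (by rw [← hrelB'])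
      -- block decomposition of the determinant
      set M : Matrix ({i // p i} ⊕ {i // ¬ p i}) ({i // p i} ⊕ {i // ¬ p i}) ℂ
        := B.submatrix (Equiv.sumCompl p) (Equiv.sumCompl p) with hM
      have hMdet : M.det = B.det := Matrix.det_submatrix_equiv_self _ B
      have hM21 : M.toBlocks₂₁ = 0 := by
        ext i j
        show B i.1 j.1 = 0
        rcases j.2 with h | h
        · rw [h, hBz3 i.1 i.2]
        · rw [h, hBz4 i.1 i.2]
      have hM22 : M.toBlocks₂₂ = B' := by
        ext i j
        show B i.1 j.1 = B' i j
        rfl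
      have hMdet2 : M.det = (M.toBlocks₁₁).det * B'.det := by
        conv_lhs => rw [← Matrix.fromBlocks_toBlocks M, hM21, hM22]
        exact Matrix.det_fromBlocks_zero₂₁ _ _ _
      -- determinant of the 2×2 block
      have hq0 : p i₀ := Or.inl rfl
      have hq1 : p i₁ := Or.inr rfl
      set q : Fin 2 → {i // p i} := ![⟨i₀, hq0⟩, ⟨i₁, hq1⟩] with hqdef
      have hinj : Function.Injective q := by
        intro a b hab
        fin_cases a <;> fin_cases b
        · rfl
        · exact absurd (congrArg Subtype.val hab) hi01
        · exact absurd (congrArg Subtype.val hab) hi01'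
        · rfl
      have hsurj : Function.Surjective q := by
        rintro ⟨x, hx | hx⟩
        · exact ⟨0, Subtype.ext hx.symm⟩
        · exact ⟨1, Subtype.ext hx.symm⟩
      have hdet11 : (M.toBlocks₁₁).det = μ * (starRingEnd ℂ) μ := by
        rw [← Matrix.det_submatrix_equiv_self (Equiv.ofBijective q ⟨hinj, hsurj⟩) M.toBlocks₁₁,
          Matrix.det_fin_two]
        show B i₀ i₀ * B i₁ i₁ - B i₀ i₁ * B i₁ i₀ = μ * (starRingEnd ℂ) μ
        rw [hrow0 i₀, hrow1 i₁, hrow0 i₁, hrow1 i₀]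
        simp [hi01, hi01']
      have hfinal : B.det = 1 := by
        rw [← hMdet, hMdet2, hdet11, hdetB', mul_one, mul_comm, hμ]
      rw [← hdetB, hfinal]

/-- a continuous `ℤ`-periodic family `β : ℝ → U(m)` with
`β(-k) = ε⁻¹ conj(β(k)) ε` (`ε` unitary skew-symmetric) satisfies
`det β(0) = det β(1/2) = 1`, and the winding number of `det β` (expressed via
any continuous phase lift `φ`) is even. -/
theorem statement10 {m : ℕ} (β : ℝ → Matrix (Fin m) (Fin m) ℂ)
    (ε : Matrix (Fin m) (Fin m) ℂ)
    (hcont : Continuous β)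
    (hunit : ∀ k, β k ∈ Matrix.unitaryGroup (Fin m) ℂ)
    (hper : ∀ k, β (k + 1) = β k)
    (hε : ε ∈ Matrix.unitaryGroup (Fin m) ℂ)
    (hskew : εᵀ = -ε)
    (hsym : ∀ k, β (-k) = ε⁻¹ * (β k).map (starRingEnd ℂ) * ε) :
    (β 0).det = 1 ∧ (β (1/2)).det = 1 ∧
    (∀ φ : ℝ → ℝ, Continuous φ →
      (∀ k, (β k).det = Complex.exp (2 * Real.pi * Complex.I * φ k)) →
      ∃ z : ℤ, φ 1 - φ 0 = 2 * z) := by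

  have hεr : ε * star ε = 1 := Matrix.mem_unitaryGroup_iff.mp hε
  have hεdet : IsUnit ε.det := by
    apply IsUnit.of_mul_eq_one (star ε).det
    rw [← Matrix.det_mul, hεr, Matrix.det_one]
  have hεinv : ε * ε⁻¹ = 1 := Matrix.mul_nonsing_inv ε hεdet
  have hεinv' : ε⁻¹ * ε = 1 := Matrix.nonsing_inv_mul ε hεdet
  -- the symmetry relation in multiplicative form, at symmetric points
  have hrel : ∀ k, β (-k) = β k → ε * β k = (β k).map (starRingEnd ℂ) * ε := by
    intro k hk
    have h1 := hsym k
    rw [hk] at h1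
    calc ε * β k = ε * (ε⁻¹ * (β k).map (starRingEnd ℂ) * ε) := by rw [← h1]
    _ = (ε * ε⁻¹) * ((β k).map (starRingEnd ℂ) * ε) := by
        simp only [Matrix.mul_assoc]
    _ = (β k).map (starRingEnd ℂ) * ε := by rw [hεinv, Matrix.one_mul]
  have hd0 : (β 0).det = 1 := by
    refine key_det (Fintype.card (Fin m)) (Fin m) rfl (β 0) ε (hunit 0) hε hskew ?_
    exact hrel 0 (by rw [neg_zero])
  have hhalf : β (-(1/2) : ℝ) = β (1/2) := by
    have := hper (-(1/2) : ℝ)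
    rw [show (-(1/2) + 1 : ℝ) = 1/2 by norm_num] at this
    exact this.symm
  have hd2 : (β (1/2)).det = 1 := by
    refine key_det (Fintype.card (Fin m)) (Fin m) rfl (β (1/2)) ε (hunit (1/2)) hε hskew ?_
    exact hrel (1/2) hhalf
  refine ⟨hd0, hd2, ?_⟩
  intro φ hφc hφ
  -- determinant facts
  have hdstar : ∀ k, ((β k).map (starRingEnd ℂ)).det = (starRingEnd ℂ) ((β k).det) :=
    fun k => ((starRingEnd ℂ).map_det (β k)).symm
  have hdneg : ∀ k, (β (-k)).det = (starRingEnd ℂ) ((β k).det) := by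
    intro k
    rw [hsym k, Matrix.det_mul, Matrix.det_mul, hdstar]
    have h1 : (ε⁻¹).det * ε.det = 1 := by
      rw [← Matrix.det_mul, hεinv', Matrix.det_one]
    calc (ε⁻¹).det * (starRingEnd ℂ) ((β k).det) * ε.det
        = ((ε⁻¹).det * ε.det) * (starRingEnd ℂ) ((β k).det) := by ring
    _ = (starRingEnd ℂ) ((β k).det) := by rw [h1, one_mul]
  have hdabs : ∀ k, (starRingEnd ℂ) ((β k).det) * (β k).det = 1 := by
    intro k
    have h1 : star (β k) * β k = 1 := Matrix.mem_unitaryGroup_iff'.mp (hunit k)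
    have h2 := congrArg Matrix.det h1
    rw [Matrix.det_mul, Matrix.det_one, Matrix.star_eq_conjTranspose,
      Matrix.det_conjTranspose] at h2
    exact h2
  -- extracting integers from the phase
  have h2πI : (2 * (Real.pi : ℂ) * Complex.I) ≠ 0 := by
    simp [Real.pi_ne_zero, Complex.I_ne_zero]
  have hint : ∀ x : ℝ, Complex.exp (2 * Real.pi * Complex.I * x) = 1 → ∃ z : ℤ, x = z := by
    intro x hx
    rw [Complex.exp_eq_one_iff] at hx
    obtain ⟨z, hz⟩ := hx
    refine ⟨z, ?_⟩
    have h1 : (x : ℂ) * (2 * Real.pi * Complex.I) = (z : ℂ) * (2 * Real.pi * Complex.I) := by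
      rw [← hz]; push_cast; ring
    have h2 : (x : ℂ) = (z : ℂ) := mul_right_cancel₀ h2πI h1
    exact_mod_cast h2
  have hφ0 : ∃ z : ℤ, φ 0 = z := hint _ (by rw [← hφ 0, hd0])
  have hφhalf : ∃ z : ℤ, φ (1/2) = z := hint _ (by rw [← hφ (1/2), hd2])
  -- the function k ↦ φ k + φ (-k) is integer-valued, continuous, hence constant
  have hgint : ∀ k, ∃ z : ℤ, φ k + φ (-k) = z := by
    intro k
    apply hint
    have : Complex.exp (2 * Real.pi * Complex.I * ((φ k + φ (-k) : ℝ) : ℂ))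
        = Complex.exp (2 * Real.pi * Complex.I * φ k)
          * Complex.exp (2 * Real.pi * Complex.I * φ (-k)) := by
      rw [← Complex.exp_add]
      congr 1
      push_cast
      ring
    rw [this, ← hφ k, ← hφ (-k), hdneg k, mul_comm, hdabs k]
  have hgc : Continuous (fun k : ℝ => φ k + φ (-k)) := by
    exact hφc.add (hφc.comp continuous_neg)
  have hgconst : φ (1/2) + φ (-(1/2)) = φ 0 + φ (-0) :=
    intconst hgc hgint (1/2) 0
  -- the function k ↦ φ (k+1) - φ k is integer-valued, continuous, hence constant
  have hhint : ∀ k, ∃ z : ℤ, φ (k + 1) - φ k = z := by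
    intro k
    apply hint
    have : Complex.exp (2 * Real.pi * Complex.I * ((φ (k+1) - φ k : ℝ) : ℂ))
        = Complex.exp (2 * Real.pi * Complex.I * φ (k+1))
          / (Complex.exp (2 * Real.pi * Complex.I * φ k)) := by
      rw [← Complex.exp_sub]
      congr 1
      push_cast
      ring
    rw [this, ← hφ (k+1), ← hφ k, hper k, div_self]
    intro h0
    have := hdabs k
    rw [h0, mul_zero] at this
    exact zero_ne_one this
  have hhc : Continuous (fun k : ℝ => φ (k + 1) - φ k) := by
    exact (hφc.comp (continuous_id.add continuous_const)).sub hφc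
  have hhconst : φ (0 + 1) - φ 0 = φ (-(1/2) + 1) - φ (-(1/2)) :=
    intconst hhc hhint 0 (-(1/2))
  rw [show ((0:ℝ) + 1) = 1 by norm_num] at hhconst
  rw [show ((-(1/2):ℝ) + 1) = 1/2 by norm_num] at hhconst
  -- conclusion
  obtain ⟨z0, hz0⟩ := hφ0
  obtain ⟨zh, hzh⟩ := hφhalf
  refine ⟨zh - z0, ?_⟩
  rw [neg_zero] at hgconst
  push_cast
  rw [hhconst]
  have : φ (-(1/2)) = 2 * φ 0 - φ (1/2) := by linarith
  rw [this, hzh, hz0]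
  ring
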